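/- Let (X,d) be a metric space. Then (X,d) is complete if and only if the space (F_USCG(X), H_end) is complete, i.e., every sequence in F_USCG(X) that is Cauchy with respect to H_end converges in H_end to some element of F_USCG(X). -/

import Mathlib

open Set Filter Metric Topology MeasureTheory

/-- The α-cut of a fuzzy set `u : X → ℝ`: for `α ≠ 0` it is `{x | u x ≥ α}`,
and for `α = 0` it is the closure of `{x | u x > 0}`. -/
noncomputable def cut {X : Type*} [MetricSpace X] (u : X → ℝ) (α : ℝ) : Set X :=
  if α = 0 then closure {x | 0 < u x} else {x | α ≤ u x}

/-- `u` is a normal upper semicontinuous fuzzy set: it takes values in `[0,1]` and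
all α-cuts (`α ∈ [0,1]`) are nonempty and closed. -/
def FUSC {X : Type*} [MetricSpace X] (u : X → ℝ) : Prop :=
  (∀ x, u x ∈ Set.Icc (0:ℝ) 1) ∧
    ∀ α ∈ Set.Icc (0:ℝ) 1, (cut u α).Nonempty ∧ IsClosed (cut u α)

/-- `F_USCG(X)`: fuzzy sets in `F_USC(X)` with compact positive α-cuts. -/
def FUSCG {X : Type*} [MetricSpace X] (u : X → ℝ) : Prop :=
  FUSC u ∧ ∀ α ∈ Set.Ioc (0:ℝ) 1, IsCompact (cut u α)

/-- `F_USCB(X)`: fuzzy sets in `F_USC(X)` with compact support. -/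
def FUSCB {X : Type*} [MetricSpace X] (u : X → ℝ) : Prop :=
  FUSC u ∧ IsCompact (cut u 0)

/-- Kuratowski lower limit of a sequence of sets. -/
def kurLiminf {Y : Type*} [MetricSpace Y] (C : ℕ → Set Y) : Set Y :=
  {y | ∃ f : ℕ → Y, (∀ n, f n ∈ C n) ∧ Tendsto f atTop (𝓝 y)}

/-- Kuratowski upper limit of a sequence of sets. -/
def kurLimsup {Y : Type*} [MetricSpace Y] (C : ℕ → Set Y) : Set Y :=
  {y | ∃ φ : ℕ → ℕ, StrictMono φ ∧
        ∃ f : ℕ → Y, (∀ n, f n ∈ C (φ n)) ∧ Tendsto f atTop (𝓝 y)}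

/-- Kuratowski convergence of a sequence of sets to a set. -/
def KurConv {Y : Type*} [MetricSpace Y] (C : ℕ → Set Y) (D : Set Y) : Prop :=
  kurLiminf C = D ∧ kurLimsup C = D

/-- The endograph of `u`: `{(x,t) ∈ X × [0,1] : u x ≥ t}`. -/
def endo {X : Type*} [MetricSpace X] (u : X → ℝ) : Set (X × ℝ) :=
  {p | p.2 ∈ Set.Icc (0:ℝ) 1 ∧ p.2 ≤ u p.1}

/-- The sendograph of `u`: `end u ∩ ([u]₀ × [0,1])`. -/
noncomputable def sendo {X : Type*} [MetricSpace X] (u : X → ℝ) : Set (X × ℝ) :=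
  endo u ∩ (cut u 0) ×ˢ (Set.Icc (0:ℝ) 1)

/-- Γ-convergence: Kuratowski convergence of endographs. -/
def GammaConv {X : Type*} [MetricSpace X] (un : ℕ → X → ℝ) (u : X → ℝ) : Prop :=
  KurConv (fun n => endo (un n)) (endo u)

/-- The endograph metric. -/
noncomputable def Hend {X : Type*} [MetricSpace X] (u v : X → ℝ) : ℝ :=
  hausdorffDist (endo u) (endo v)

/-- The sendograph metric. -/
noncomputable def Hsend {X : Type*} [MetricSpace X] (u v : X → ℝ) : ℝ :=
  hausdorffDist (sendo u) (sendo v)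

/-- The set of platform points of `u`:
`α ∈ (0,1)` with `closure {u > α}` a proper subset of `[u]_α`. -/
def Pset {X : Type*} [MetricSpace X] (u : X → ℝ) : Set ℝ :=
  {α | α ∈ Set.Ioo (0:ℝ) 1 ∧ closure {x | α < u x} ⊂ cut u α}

/-- `P₀(u)`: the set of `α ∈ (0,1)` such that `H([u]_β, [u]_α)` does not tend to `0`
as `β → α`. -/
def P0set {X : Type*} [MetricSpace X] (u : X → ℝ) : Set ℝ :=
  {α | α ∈ Set.Ioo (0:ℝ) 1 ∧
    ¬ Tendsto (fun β => hausdorffDist (cut u β) (cut u α)) (𝓝[≠] α) (𝓝 0)}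


open EMetric
open scoped ENNReal Classical

section Helpers

variable {X : Type*} [MetricSpace X]

lemma cut_pos_eq (u : X → ℝ) {α : ℝ} (hα : α ≠ 0) : cut u α = {x | α ≤ u x} := if_neg hα

lemma zero_mem_endo {u : X → ℝ} (h : ∀ x, 0 ≤ u x) (x : X) : (x, (0:ℝ)) ∈ endo u :=
  ⟨⟨le_refl 0, zero_le_one⟩, h x⟩

lemma endo_isClosed {u : X → ℝ} (hu : FUSC u) : IsClosed (endo u) := by
  apply IsSeqClosed.isClosed
  intro f p hf hfp
  have hfst : Tendsto (fun n => (f n).1) atTop (𝓝 p.1) := (continuous_fst.tendsto p).comp hfp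
  have hsnd : Tendsto (fun n => (f n).2) atTop (𝓝 p.2) := (continuous_snd.tendsto p).comp hfp
  have h0 : 0 ≤ p.2 := le_of_tendsto_of_tendsto' tendsto_const_nhds hsnd fun n => (hf n).1.1
  have h1 : p.2 ≤ 1 := le_of_tendsto_of_tendsto' hsnd tendsto_const_nhds fun n => (hf n).1.2
  refine ⟨⟨h0, h1⟩, ?_⟩
  rcases eq_or_lt_of_le h0 with h | h
  · rw [← h]; exact (hu.1 p.1).1
  · refine le_of_forall_lt fun c hc => ?_
    rcases lt_or_ge c 0 with hc0 | hc0
    · exact hc0.trans_le (hu.1 p.1).1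
    · set α := (c + p.2) / 2 with hαdef
      have hαc : c < α := by rw [hαdef]; linarith
      have hαlt : α < p.2 := by rw [hαdef]; linarith
      have hα0 : 0 < α := lt_of_le_of_lt hc0 hαc
      have hα1 : α ≤ 1 := le_of_lt (lt_of_lt_of_le hαlt h1)
      have hcl : IsClosed (cut u α) := (hu.2 α ⟨hα0.le, hα1⟩).2
      have hev : ∀ᶠ n in atTop, (f n).1 ∈ cut u α := by
        filter_upwards [hsnd.eventually (eventually_gt_nhds hαlt)] with n hn
        rw [cut_pos_eq u hα0.ne']
        exact le_trans hn.le (hf n).2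
      have hmem := hcl.mem_of_tendsto hfst hev
      rw [cut_pos_eq u hα0.ne'] at hmem
      exact lt_of_lt_of_le hαc hmem

lemma hausdorffEdist_endo_le_one {u v : X → ℝ}
    (hu : ∀ x, u x ∈ Set.Icc (0:ℝ) 1) (hv : ∀ x, v x ∈ Set.Icc (0:ℝ) 1) :
    hausdorffEdist (endo u) (endo v) ≤ 1 := by
  have key : ∀ (w w' : X → ℝ), (∀ x, w' x ∈ Set.Icc (0:ℝ) 1) →
      ∀ p ∈ endo w, ∃ q ∈ endo w', edist p q ≤ 1 := by
    intro w w' hw' p hp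
    refine ⟨(p.1, 0), zero_mem_endo (fun x => (hw' x).1) p.1, ?_⟩
    have hd : dist p.2 (0:ℝ) ≤ 1 := by
      rw [Real.dist_eq, sub_zero, abs_of_nonneg hp.1.1]; exact hp.1.2
    calc edist p (p.1, 0) = max (edist p.1 p.1) (edist p.2 (0:ℝ)) := Prod.edist_eq _ _
      _ = edist p.2 (0:ℝ) := by simp
      _ ≤ 1 := by rw [edist_dist]; exact ENNReal.ofReal_le_one.2 hd
  exact hausdorffEdist_le_of_mem_edist (key u v hv) (key v u hu)

lemma forward_dir [CompleteSpace X]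
    (s : ℕ → X → ℝ) (hs : ∀ n, FUSCG (s n))
    (hC : ∀ ε > (0:ℝ), ∃ N : ℕ, ∀ m ≥ N, ∀ n ≥ N, Hend (s m) (s n) < ε) :
    ∃ v : X → ℝ, FUSCG v ∧ Tendsto (fun n => Hend (s n) v) atTop (𝓝 0) := by
  have h01 : ∀ n, ∀ x, s n x ∈ Set.Icc (0:ℝ) 1 := fun n => (hs n).1.1
  have hfin : ∀ m n, hausdorffEdist (endo (s m)) (endo (s n)) ≠ ⊤ := fun m n =>
    ((hausdorffEdist_endo_le_one (h01 m) (h01 n)).trans_lt ENNReal.one_lt_top).ne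
  let C : ℕ → TopologicalSpace.Closeds (X × ℝ) := fun n => ⟨endo (s n), endo_isClosed (hs n).1⟩
  have hcauchy : CauchySeq C := by
    rw [EMetric.cauchySeq_iff]
    intro ε hε
    rcases le_or_gt ε 1 with hε1 | hε1
    · have hεtop : ε ≠ ⊤ := (hε1.trans_lt ENNReal.one_lt_top).ne
      have hεr : 0 < ε.toReal := ENNReal.toReal_pos hε.ne' hεtop
      obtain ⟨N, hN⟩ := hC ε.toReal hεr
      refine ⟨N, fun m hm n hn => ?_⟩
      rw [EMetric.Closeds.edist_eq]
      have h2 := hN m hm n hn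
      rw [show Hend (s m) (s n) = (hausdorffEdist (endo (s m)) (endo (s n))).toReal from rfl] at h2
      exact (ENNReal.toReal_lt_toReal (hfin m n) hεtop).1 h2
    · refine ⟨0, fun m _ n _ => ?_⟩
      rw [EMetric.Closeds.edist_eq]
      exact (hausdorffEdist_endo_le_one (h01 m) (h01 n)).trans_lt hε1
  obtain ⟨L, hL⟩ := cauchySeq_tendsto_of_complete hcauchy
  set E : Set (X × ℝ) := L.1 with hEdef
  have hEc : IsClosed E := L.2
  have hed : ∀ ε : ℝ≥0∞, 0 < ε → ∃ N, ∀ n ≥ N, hausdorffEdist (endo (s n)) E < ε := by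
    intro ε hε
    obtain ⟨N, hN⟩ := EMetric.tendsto_atTop.1 hL ε hε
    refine ⟨N, fun n hn => ?_⟩
    have := hN n hn
    rwa [EMetric.Closeds.edist_eq] at this
  have memE : ∀ p : X × ℝ, (∀ ε : ℝ≥0∞, 0 < ε → ∃ q ∈ E, edist p q < ε) → p ∈ E := by
    intro p h
    rw [← hEc.closure_eq]
    exact EMetric.mem_closure_iff.2 fun ε hε => h ε hε
  have hEsub : ∀ p : X × ℝ, p ∈ E → 0 ≤ p.2 ∧ p.2 ≤ 1 := by
    intro p hp
    have hcl : IsClosed ((univ : Set X) ×ˢ Set.Icc (0:ℝ) 1) := isClosed_univ.prod isClosed_Icc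
    have hmem : p ∈ (univ : Set X) ×ˢ Set.Icc (0:ℝ) 1 := by
      rw [← hcl.closure_eq]
      apply EMetric.mem_closure_iff.2
      intro ε hε
      obtain ⟨N, hN⟩ := hed ε hε
      have h1 : infEdist p (endo (s N)) ≤ hausdorffEdist E (endo (s N)) :=
        infEdist_le_hausdorffEdist_of_mem hp
      rw [show hausdorffEdist E (endo (s N)) = hausdorffEdist (endo (s N)) E from hausdorffEdist_comm] at h1
      obtain ⟨q, hq, hq2⟩ := infEdist_lt_iff.1 (lt_of_le_of_lt h1 (hN N le_rfl))
      exact ⟨q, ⟨trivial, hq.1⟩, hq2⟩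
    exact ⟨hmem.2.1, hmem.2.2⟩
  have hE0 : ∀ x : X, (x, (0:ℝ)) ∈ E := by
    intro x
    apply memE
    intro ε hε
    obtain ⟨N, hN⟩ := hed ε hε
    have h1 : infEdist (x, (0:ℝ)) E ≤ hausdorffEdist (endo (s N)) E :=
      infEdist_le_hausdorffEdist_of_mem (zero_mem_endo (fun y => (h01 N y).1) x)
    exact infEdist_lt_iff.1 (lt_of_le_of_lt h1 (hN N le_rfl))
  have hdown : ∀ (x : X) (t r : ℝ), (x, t) ∈ E → 0 ≤ r → r ≤ t → (x, r) ∈ E := by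
    intro x t r hxt hr0 hrt
    apply memE
    intro ε hε
    have hε2 : (0:ℝ≥0∞) < ε / 2 := ENNReal.half_pos hε.ne'
    obtain ⟨N, hN⟩ := hed (ε / 2) hε2
    have h1 : infEdist (x, t) (endo (s N)) < ε / 2 := by
      have h := infEdist_le_hausdorffEdist_of_mem (t := endo (s N)) hxt
      rw [hausdorffEdist_comm] at h
      exact lt_of_le_of_lt h (hN N le_rfl)
    obtain ⟨⟨y, rr⟩, hq, hq2⟩ := infEdist_lt_iff.1 h1
    have hq' : (y, min r rr) ∈ endo (s N) := by
      refine ⟨⟨le_min hr0 hq.1.1, ?_⟩, (min_le_right _ _).trans hq.2⟩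
      exact le_trans (min_le_left _ _) (hrt.trans (hEsub _ hxt).2)
    have hkey : edist (x, r) (y, min r rr) ≤ edist (x, t) (y, rr) := by
      rw [Prod.edist_eq, Prod.edist_eq]
      apply max_le_max le_rfl
      rw [edist_dist, edist_dist]
      apply ENNReal.ofReal_le_ofReal
      rw [Real.dist_eq, Real.dist_eq]
      rcases le_total r rr with h | h
      · rw [min_eq_left h]
        simp [abs_nonneg]
      · rw [min_eq_right h, abs_of_nonneg (by linarith)]
        exact le_trans (by linarith) (le_abs_self _)
    have h3 : infEdist (x, r) E ≤ edist (x, r) (y, min r rr) + infEdist (y, min r rr) E :=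
      infEdist_le_edist_add_infEdist
    have h4 : infEdist (y, min r rr) E ≤ hausdorffEdist (endo (s N)) E :=
      infEdist_le_hausdorffEdist_of_mem hq'
    have h5 : infEdist (x, r) E < ε / 2 + ε / 2 :=
      lt_of_le_of_lt h3
        (ENNReal.add_lt_add (lt_of_le_of_lt hkey hq2) (lt_of_le_of_lt h4 (hN N le_rfl)))
    rw [ENNReal.add_halves] at h5
    exact infEdist_lt_iff.1 h5
  set S : ℝ → Set X := fun α => {x | (x, α) ∈ E} with hSdef
  have hSclosed : ∀ α, IsClosed (S α) :=
    fun α => hEc.preimage (continuous_id.prodMk continuous_const)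
  have hmonoS : ∀ a b : ℝ, 0 ≤ a → a ≤ b → S b ⊆ S a :=
    fun a b ha hab x hx => hdown x b a hx ha hab
  have hbdd : ∀ x : X, BddAbove {t : ℝ | (x, t) ∈ E} :=
    fun x => ⟨1, fun t ht => (hEsub (x, t) ht).2⟩
  set v : X → ℝ := fun x => sSup {t : ℝ | (x, t) ∈ E} with hvdef
  have hvmem : ∀ x, (x, v x) ∈ E := by
    intro x
    have hcl : IsClosed {t : ℝ | (x, t) ∈ E} :=
      hEc.preimage (continuous_const.prodMk continuous_id)
    exact hcl.csSup_mem ⟨0, hE0 x⟩ (hbdd x)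
  have hv0 : ∀ x, 0 ≤ v x := fun x => le_csSup (hbdd x) (hE0 x)
  have hv1 : ∀ x, v x ≤ 1 := fun x => csSup_le ⟨0, hE0 x⟩ fun t ht => (hEsub (x, t) ht).2
  have hcutv : ∀ α : ℝ, 0 < α → cut v α = S α := by
    intro α hα
    rw [cut_pos_eq v hα.ne']
    ext x
    constructor
    · intro h
      exact hdown x (v x) α (hvmem x) hα.le h
    · intro h
      exact le_csSup (hbdd x) h
  have hendov : endo v = E := by
    ext ⟨x, t⟩
    simp only [endo, mem_setOf_eq, Set.mem_Icc]
    constructor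
    · rintro ⟨⟨ht0, ht1⟩, htv⟩
      exact hdown x (v x) t (hvmem x) ht0 htv
    · intro h
      exact ⟨⟨(hEsub _ h).1, (hEsub _ h).2⟩, le_csSup (hbdd x) h⟩
  have hScompact : ∀ α : ℝ, 0 < α → α ≤ 1 → IsCompact (S α) := by
    intro α hα0 hα1
    apply TotallyBounded.isCompact_of_isClosed _ (hSclosed α)
    rw [Metric.totallyBounded_iff]
    intro ε hε
    set δ := min (ε / 2) (α / 2) with hδdef
    have hδε : δ ≤ ε / 2 := min_le_left _ _
    have hδα : δ ≤ α / 2 := min_le_right _ _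
    have hδ : 0 < δ := lt_min (half_pos hε) (half_pos hα0)
    obtain ⟨N, hN⟩ := hed (ENNReal.ofReal δ) (ENNReal.ofReal_pos.2 hδ)
    have hK : IsCompact (cut (s N) (α - δ)) :=
      (hs N).2 (α - δ) ⟨by linarith, by linarith⟩
    obtain ⟨t, htfin, htcov⟩ :=
      Metric.totallyBounded_iff.1 hK.totallyBounded (ε / 2) (half_pos hε)
    refine ⟨t, htfin, ?_⟩
    intro x hx
    have h1 : infEdist (x, α) (endo (s N)) < ENNReal.ofReal δ := by
      have h := infEdist_le_hausdorffEdist_of_mem (t := endo (s N)) (show (x, α) ∈ E from hx)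
      rw [hausdorffEdist_comm] at h
      exact lt_of_le_of_lt h (hN N le_rfl)
    obtain ⟨⟨y, r⟩, hyr, hlt⟩ := infEdist_lt_iff.1 h1
    rw [edist_lt_ofReal, Prod.dist_eq] at hlt
    have hxy : dist x y < δ := (max_lt_iff.1 hlt).1
    have hαr : |α - r| < δ := by
      have h := (max_lt_iff.1 hlt).2
      rwa [Real.dist_eq] at h
    have hy : y ∈ cut (s N) (α - δ) := by
      rw [cut_pos_eq _ (by linarith : α - δ ≠ 0)]
      have h2 : α - δ ≤ r := by
        have := abs_lt.1 hαr
        linarith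
      exact le_trans h2 hyr.2
    obtain ⟨z, hz, hz2⟩ := mem_iUnion₂.1 (htcov hy)
    refine mem_iUnion₂.2 ⟨z, hz, ?_⟩
    rw [Metric.mem_ball] at hz2 ⊢
    calc dist x z ≤ dist x y + dist y z := dist_triangle _ _ _
      _ < δ + ε / 2 := add_lt_add hxy hz2
      _ ≤ ε := by linarith
  have hSne : ∀ α : ℝ, 0 < α → α < 1 → (S α).Nonempty := by
    intro α hα0 hα1
    obtain ⟨N, hN⟩ := hed (ENNReal.ofReal (1 - α)) (ENNReal.ofReal_pos.2 (by linarith))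
    obtain ⟨xN, hxN⟩ := ((hs N).1.2 1 ⟨zero_le_one, le_refl 1⟩).1
    rw [cut_pos_eq _ one_ne_zero] at hxN
    have hmem : (xN, (1:ℝ)) ∈ endo (s N) := ⟨⟨zero_le_one, le_refl 1⟩, hxN⟩
    have h1 : infEdist (xN, (1:ℝ)) E < ENNReal.ofReal (1 - α) :=
      lt_of_le_of_lt (infEdist_le_hausdorffEdist_of_mem hmem) (hN N le_rfl)
    obtain ⟨⟨z, r⟩, hzr, hlt⟩ := infEdist_lt_iff.1 h1
    rw [edist_lt_ofReal, Prod.dist_eq] at hlt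
    have hr : |1 - r| < 1 - α := by
      have h := (max_lt_iff.1 hlt).2
      rwa [Real.dist_eq] at h
    have hαr : α ≤ r := by
      have := abs_lt.1 hr
      linarith
    exact ⟨z, hdown z r α hzr hα0.le hαr⟩
  have hS1ne : (S 1).Nonempty := by
    set T : ℕ → Set X := fun k => S (1 - ((k:ℝ) + 2)⁻¹) with hTdef
    have hak : ∀ k : ℕ, 0 < 1 - ((k:ℝ) + 2)⁻¹ ∧ 1 - ((k:ℝ) + 2)⁻¹ < 1 := by
      intro k
      have h2 : (0:ℝ) < (k:ℝ) + 2 := by positivity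
      have h3 : ((k:ℝ) + 2)⁻¹ ≤ 2⁻¹ := by
        apply inv_anti₀ (by norm_num)
        have : (0:ℝ) ≤ (k:ℝ) := Nat.cast_nonneg k
        linarith
      have h4 : 0 < ((k:ℝ) + 2)⁻¹ := by positivity
      constructor <;> [linarith; linarith]
    have hTne : ∀ k, (T k).Nonempty := fun k => hSne _ (hak k).1 (hak k).2
    have hTcomp : ∀ k, IsCompact (T k) := fun k => hScompact _ (hak k).1 (hak k).2.le
    have hTcl : ∀ k, IsClosed (T k) := fun _ => hSclosed _
    have hcast : ∀ a b : ℕ, a ≤ b → 1 - ((a:ℝ) + 2)⁻¹ ≤ 1 - ((b:ℝ) + 2)⁻¹ := by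
      intro a b hab
      have h1 : (a:ℝ) + 2 ≤ (b:ℝ) + 2 := by
        have := (Nat.cast_le (α := ℝ)).2 hab
        linarith
      have h2 : ((b:ℝ) + 2)⁻¹ ≤ ((a:ℝ) + 2)⁻¹ := inv_anti₀ (by positivity) h1
      linarith
    have hTdir : Directed (· ⊇ ·) T := by
      intro a b
      exact ⟨max a b, hmonoS _ _ (hak a).1.le (hcast a (max a b) (le_max_left a b)),
        hmonoS _ _ (hak b).1.le (hcast b (max a b) (le_max_right a b))⟩
    obtain ⟨x1, hx1⟩ :=
      IsCompact.nonempty_iInter_of_directed_nonempty_isCompact_isClosed T hTdir hTne hTcomp hTcl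
    refine ⟨x1, ?_⟩
    have hconv : Tendsto (fun k : ℕ => ((x1 : X), 1 - ((k:ℝ) + 2)⁻¹)) atTop (𝓝 (x1, 1)) := by
      apply Tendsto.prodMk_nhds tendsto_const_nhds
      have hinv : Tendsto (fun k : ℕ => ((k:ℝ) + 2)⁻¹) atTop (𝓝 0) := by
        apply Filter.Tendsto.inv_tendsto_atTop
        exact tendsto_atTop_add_const_right _ 2 tendsto_natCast_atTop_atTop
      have h2 : Tendsto (fun k : ℕ => (1:ℝ) - ((k:ℝ) + 2)⁻¹) atTop (𝓝 ((1:ℝ) - 0)) :=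
        Tendsto.const_sub 1 hinv
      simpa using h2
    exact hEc.mem_of_tendsto hconv (Filter.Eventually.of_forall fun k => mem_iInter.1 hx1 k)
  refine ⟨v, ⟨⟨fun x => ⟨hv0 x, hv1 x⟩, ?_⟩, ?_⟩, ?_⟩
  · intro α hα
    rcases eq_or_lt_of_le hα.1 with h0 | h0
    · rw [show α = 0 from h0.symm]
      constructor
      · rw [cut, if_pos rfl]
        obtain ⟨x1, hx1⟩ := hS1ne
        exact ⟨x1, subset_closure
          (show 0 < v x1 from lt_of_lt_of_le one_pos (le_csSup (hbdd x1) hx1))⟩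
      · rw [cut, if_pos rfl]
        exact isClosed_closure
    · rw [hcutv α h0]
      exact ⟨hS1ne.mono (hmonoS α 1 h0.le hα.2), hSclosed α⟩
  · intro α hα
    rw [hcutv α hα.1]
    exact hScompact α hα.1 hα.2
  · rw [Metric.tendsto_atTop]
    intro ε hε
    obtain ⟨N, hN⟩ := hed (ENNReal.ofReal ε) (ENNReal.ofReal_pos.2 hε)
    refine ⟨N, fun n hn => ?_⟩
    have h1 : Hend (s n) v = (hausdorffEdist (endo (s n)) E).toReal := by
      rw [show Hend (s n) v = hausdorffDist (endo (s n)) (endo v) from rfl, hendov]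
      rfl
    rw [Real.dist_eq, sub_zero,
      abs_of_nonneg (show (0:ℝ) ≤ Hend (s n) v from hausdorffDist_nonneg), h1]
    exact ENNReal.toReal_lt_of_lt_ofReal (hN n hn)

end Helpers

theorem complete_iff_FUSCG_Hend_complete
    {X : Type*} [MetricSpace X] :
    CompleteSpace X ↔
      ∀ s : ℕ → X → ℝ, (∀ n, FUSCG (s n)) →
        (∀ ε > (0:ℝ), ∃ N : ℕ, ∀ m ≥ N, ∀ n ≥ N, Hend (s m) (s n) < ε) →
        ∃ v : X → ℝ, FUSCG v ∧ Tendsto (fun n => Hend (s n) v) atTop (𝓝 0) := by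
  constructor
  · intro hX s hs hC
    exact forward_dir s hs hC
  · intro H
    apply Metric.complete_of_cauchySeq_tendsto
    intro x hx
    set s : ℕ → X → ℝ := fun n y => if y = x n then 1 else 0 with hsdef
    have hsval : ∀ n y, s n y ∈ Set.Icc (0:ℝ) 1 := by
      intro n y
      by_cases h : y = x n <;> simp [hsdef, h]
    have hcutpos : ∀ n, ∀ α : ℝ, 0 < α → α ≤ 1 → cut (s n) α = {x n} := by
      intro n α hα0 hα1
      rw [cut_pos_eq _ hα0.ne']
      ext y
      simp only [mem_setOf_eq, mem_singleton_iff, hsdef]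
      constructor
      · intro h
        by_contra hne
        rw [if_neg hne] at h
        linarith
      · intro h
        rw [if_pos h]
        exact hα1
    have hcut0 : ∀ n, cut (s n) 0 = {x n} := by
      intro n
      rw [cut, if_pos rfl]
      have hset : {y | 0 < s n y} = {x n} := by
        ext y
        simp only [mem_setOf_eq, mem_singleton_iff, hsdef]
        by_cases h : y = x n <;> simp [h]
      rw [hset, closure_singleton]
    have hFUSCG : ∀ n, FUSCG (s n) := by
      intro n
      refine ⟨⟨hsval n, ?_⟩, ?_⟩
      · intro α hα
        rcases eq_or_lt_of_le hα.1 with h0 | h0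
        · rw [show α = 0 from h0.symm, hcut0 n]
          exact ⟨singleton_nonempty _, isClosed_singleton⟩
        · rw [hcutpos n α h0 hα.2]
          exact ⟨singleton_nonempty _, isClosed_singleton⟩
      · intro α hα
        rw [hcutpos n α hα.1 hα.2]
        exact isCompact_singleton
    have hfin : ∀ m n, hausdorffEdist (endo (s m)) (endo (s n)) ≠ ⊤ := fun m n =>
      ((hausdorffEdist_endo_le_one (hsval m) (hsval n)).trans_lt ENNReal.one_lt_top).ne
    have hkey : ∀ m n, ∀ p ∈ endo (s m), ∃ q ∈ endo (s n), dist p q ≤ dist (x m) (x n) := by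
      intro m n p hp
      obtain ⟨y, t⟩ := p
      by_cases h : y = x m
      · refine ⟨(x n, t), ⟨hp.1, by simp [hsdef]; exact hp.1.2⟩, ?_⟩
        rw [Prod.dist_eq]
        simp only [dist_self]
        rw [h]
        exact max_le le_rfl dist_nonneg
      · have ht : t = 0 := by
          have h1 : t ≤ s m y := hp.2
          rw [hsdef] at h1
          simp only [if_neg h] at h1
          exact le_antisymm h1 hp.1.1
        refine ⟨(y, 0), zero_mem_endo (fun z => (hsval n z).1) y, ?_⟩
        rw [ht]
        simp [dist_nonneg]
    have hHle : ∀ m n, Hend (s m) (s n) ≤ dist (x m) (x n) := by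
      intro m n
      apply hausdorffDist_le_of_mem_dist dist_nonneg (hkey m n)
      intro q hq
      obtain ⟨p, hp, hd⟩ := hkey n m q hq
      exact ⟨p, hp, by rwa [dist_comm (x m) (x n)]⟩
    have hcauchyH : ∀ ε > (0:ℝ), ∃ N : ℕ, ∀ m ≥ N, ∀ n ≥ N, Hend (s m) (s n) < ε := by
      intro ε hε
      obtain ⟨N, hN⟩ := Metric.cauchySeq_iff.1 hx ε hε
      exact ⟨N, fun m hm n hn => lt_of_le_of_lt (hHle m n) (hN m hm n hn)⟩
    obtain ⟨v, hv, hconv⟩ := H s hFUSCG hcauchyH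
    obtain ⟨y, hy⟩ := (hv.1.2 1 ⟨zero_le_one, le_refl 1⟩).1
    rw [cut_pos_eq _ one_ne_zero] at hy
    have hymem : (y, (1:ℝ)) ∈ endo v := ⟨⟨zero_le_one, le_refl 1⟩, hy⟩
    refine ⟨y, Metric.tendsto_atTop.2 fun ε hε => ?_⟩
    set δ := min ε 1 with hδdef
    have hδ : 0 < δ := lt_min hε one_pos
    obtain ⟨N, hN⟩ := Metric.tendsto_atTop.1 hconv δ hδ
    refine ⟨N, fun n hn => ?_⟩
    have h1 : Hend (s n) v < δ := by
      have h := hN n hn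
      rwa [Real.dist_eq, sub_zero,
        abs_of_nonneg (show (0:ℝ) ≤ Hend (s n) v from hausdorffDist_nonneg)] at h
    have hfin2 : hausdorffEdist (endo v) (endo (s n)) ≠ ⊤ :=
      ((hausdorffEdist_endo_le_one hv.1.1 (hsval n)).trans_lt ENNReal.one_lt_top).ne
    have h2 : hausdorffDist (endo v) (endo (s n)) < δ := by
      rwa [show Hend (s n) v = hausdorffDist (endo (s n)) (endo v) from rfl,
        hausdorffDist_comm] at h1
    obtain ⟨⟨z, t⟩, hzt, hd⟩ := exists_dist_lt_of_hausdorffDist_lt hymem h2 hfin2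
    rw [Prod.dist_eq] at hd
    have hyz : dist y z < δ := (max_lt_iff.1 hd).1
    have h1t : |1 - t| < δ := by
      have h := (max_lt_iff.1 hd).2
      rwa [Real.dist_eq] at h
    have htpos : 0 < t := by
      have h3 : δ ≤ 1 := min_le_right _ _
      have := abs_lt.1 h1t
      linarith
    have hz : z = x n := by
      by_contra hne
      have h4 : t ≤ s n z := hzt.2
      rw [hsdef] at h4
      simp only [if_neg hne] at h4
      linarith
    rw [dist_comm]
    rw [← hz]
    exact lt_of_lt_of_le hyz (min_le_left _ _)
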